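/- Every nice 7-coloring of the whole triangular lattice is an Isbell coloring. Precisely: if c : ℤ × ℤ → Fin 7 is such that any two distinct vertices of T at graph distance at most 2 satisfy c(u) ≠ c(v), then there exist z ∈ {3, 5} ⊆ ZMod 7 and a bijection π : ZMod 7 → Fin 7 such that c(v) = π(ℓ_z(v)) for all v ∈ ℤ × ℤ. -/

import Mathlib

/-- The triangular lattice graph on `ℤ × ℤ`: `(a,b)` and `(c,d)` are adjacent iff
`(c − a, d − b) ∈ {(1,0), (−1,0), (0,1), (0,−1), (1,−1), (−1,1)}`. -/
def triLattice : SimpleGraph (ℤ × ℤ) where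
  Adj u v := (v.1 - u.1, v.2 - u.2) ∈
    ({(1, 0), (-1, 0), (0, 1), (0, -1), (1, -1), (-1, 1)} : Set (ℤ × ℤ))
  symm := by
    refine ⟨fun u v h => ?_⟩
    simp only [Set.mem_insert_iff, Set.mem_singleton_iff, Prod.mk.injEq] at h ⊢
    omega
  loopless := by
    refine ⟨fun u h => ?_⟩
    simp only [Set.mem_insert_iff, Set.mem_singleton_iff, Prod.mk.injEq] at h
    omega

/-- The linear coloring `ℓ_z : ℤ × ℤ → ZMod 7`, `ℓ_z(x, y) = x + z·y`. -/
def linColoring (z : ZMod 7) (v : ℤ × ℤ) : ZMod 7 :=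
  (v.1 : ZMod 7) + z * (v.2 : ZMod 7)

namespace NiceAux

/-- the 18 nonzero vectors of graph distance ≤ 2 -/
def Dl : List (ℤ × ℤ) :=
  [(1,0),(-1,0),(0,1),(0,-1),(1,-1),(-1,1),
   (2,0),(-2,0),(0,2),(0,-2),(2,-2),(-2,2),
   (1,1),(-1,-1),(2,-1),(-2,1),(-1,2),(1,-2)]

def Nice (f : ℤ × ℤ → Fin 7) : Prop :=
  ∀ u v : ℤ × ℤ, (v.1 - u.1, v.2 - u.2) ∈ Dl → f u ≠ f v

lemma adj_off (u : ℤ × ℤ) (a b : ℤ)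
    (h : (a = 1 ∧ b = 0) ∨ (a = -1 ∧ b = 0) ∨ (a = 0 ∧ b = 1) ∨ (a = 0 ∧ b = -1) ∨
      (a = 1 ∧ b = -1) ∨ (a = -1 ∧ b = 1)) :
    triLattice.Adj u (u.1 + a, u.2 + b) := by
  show _ ∈ _
  simp only [Set.mem_insert_iff, Set.mem_singleton_iff, Prod.mk.injEq]
  omega

lemma dist_le_one (u : ℤ × ℤ) (a b : ℤ)
    (h : (a = 1 ∧ b = 0) ∨ (a = -1 ∧ b = 0) ∨ (a = 0 ∧ b = 1) ∨ (a = 0 ∧ b = -1) ∨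
      (a = 1 ∧ b = -1) ∨ (a = -1 ∧ b = 1)) :
    triLattice.dist u (u.1 + a, u.2 + b) ≤ 2 :=
  le_trans (SimpleGraph.dist_le ((adj_off u a b h).toWalk)) (by simp)

lemma dist_le_two (u : ℤ × ℤ) (a b m1 m2 : ℤ)
    (h1 : (m1 = 1 ∧ m2 = 0) ∨ (m1 = -1 ∧ m2 = 0) ∨ (m1 = 0 ∧ m2 = 1) ∨ (m1 = 0 ∧ m2 = -1) ∨
      (m1 = 1 ∧ m2 = -1) ∨ (m1 = -1 ∧ m2 = 1))
    (h2 : (a - m1 = 1 ∧ b - m2 = 0) ∨ (a - m1 = -1 ∧ b - m2 = 0) ∨ (a - m1 = 0 ∧ b - m2 = 1) ∨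
      (a - m1 = 0 ∧ b - m2 = -1) ∨ (a - m1 = 1 ∧ b - m2 = -1) ∨ (a - m1 = -1 ∧ b - m2 = 1)) :
    triLattice.dist u (u.1 + a, u.2 + b) ≤ 2 := by
  have w1 := adj_off u m1 m2 h1
  have w2 := adj_off (u.1 + m1, u.2 + m2) (a - m1) (b - m2) h2
  have he : (u.1 + m1 + (a - m1), u.2 + m2 + (b - m2)) = (u.1 + a, u.2 + b) := by
    simp only [Prod.mk.injEq]; omega
  rw [he] at w2
  exact le_trans (SimpleGraph.dist_le (SimpleGraph.Walk.cons w1 w2.toWalk)) (by simp)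

lemma nice_of_hnice (c : ℤ × ℤ → Fin 7)
    (hnice : ∀ u v : ℤ × ℤ, u ≠ v → triLattice.dist u v ≤ 2 → c u ≠ c v) : Nice c := by
  intro u v h
  have hne : u ≠ v := by
    intro he; rw [he] at h
    simp only [Dl, List.mem_cons, List.not_mem_nil, or_false, Prod.mk.injEq, sub_self] at h
    omega
  apply hnice u v hne
  simp only [Dl, List.mem_cons, List.not_mem_nil, or_false, Prod.mk.injEq] at h
  have hv : v = (u.1 + (v.1 - u.1), u.2 + (v.2 - u.2)) := by simp [Prod.ext_iff]
  rw [hv]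
  rcases h with ⟨h1,h2⟩|⟨h1,h2⟩|⟨h1,h2⟩|⟨h1,h2⟩|⟨h1,h2⟩|⟨h1,h2⟩|⟨h1,h2⟩|⟨h1,h2⟩|⟨h1,h2⟩|⟨h1,h2⟩|⟨h1,h2⟩|⟨h1,h2⟩|⟨h1,h2⟩|⟨h1,h2⟩|⟨h1,h2⟩|⟨h1,h2⟩|⟨h1,h2⟩|⟨h1,h2⟩
  · exact dist_le_one u _ _ (by omega)
  · exact dist_le_one u _ _ (by omega)
  · exact dist_le_one u _ _ (by omega)
  · exact dist_le_one u _ _ (by omega)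
  · exact dist_le_one u _ _ (by omega)
  · exact dist_le_one u _ _ (by omega)
  · exact dist_le_two u _ _ 1 0 (by omega) (by omega)
  · exact dist_le_two u _ _ (-1) 0 (by omega) (by omega)
  · exact dist_le_two u _ _ 0 1 (by omega) (by omega)
  · exact dist_le_two u _ _ 0 (-1) (by omega) (by omega)
  · exact dist_le_two u _ _ 1 (-1) (by omega) (by omega)
  · exact dist_le_two u _ _ (-1) 1 (by omega) (by omega)
  · exact dist_le_two u _ _ 1 0 (by omega) (by omega)
  · exact dist_le_two u _ _ (-1) 0 (by omega) (by omega)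
  · exact dist_le_two u _ _ 1 0 (by omega) (by omega)
  · exact dist_le_two u _ _ (-1) 0 (by omega) (by omega)
  · exact dist_le_two u _ _ 0 1 (by omega) (by omega)
  · exact dist_le_two u _ _ 0 (-1) (by omega) (by omega)

end NiceAux
namespace NiceAux

abbrev Asg := List ((ℤ × ℤ) × Fin 7)

def getv (asg : Asg) (p : ℤ × ℤ) : Fin 7 := (asg.lookup p).getD 0

def conflict (q p : ℤ × ℤ) : Bool := decide ((p.1 - q.1, p.2 - q.2) ∈ Dl)

def compat (asg : Asg) (p : ℤ × ℤ) (k : Fin 7) : Bool :=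
  asg.all fun qj => !(conflict qj.1 p) || (qj.2 != k)

def searchB (Q : Asg → Bool) : List (ℤ × ℤ) → Asg → Bool
  | [], asg => Q asg
  | p :: ps, asg =>
      (List.finRange 7).all fun k => !(compat asg p k) || searchB Q ps (asg ++ [(p, k)])

theorem searchB_sound (f : ℤ × ℤ → Fin 7) (hf : Nice f) (Q : Asg → Bool) :
    ∀ (ps : List (ℤ × ℤ)) (asg : Asg), (∀ qj ∈ asg, f qj.1 = qj.2) →
      searchB Q ps asg = true → Q (asg ++ ps.map fun p => (p, f p)) = true := by
  intro ps
  induction ps with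
  | nil => intro asg _ hs; simpa [searchB] using hs
  | cons p ps ih =>
    intro asg h hs
    have hc : compat asg p (f p) = true := by
      rw [compat, List.all_eq_true]
      intro qj hq
      by_cases hcf : conflict qj.1 p = true
      · have hne : f qj.1 ≠ f p := hf qj.1 p (of_decide_eq_true hcf)
        rw [h qj hq] at hne
        simp only [Bool.or_eq_true, Bool.not_eq_true', bne_iff_ne, ne_eq]
        exact Or.inr hne
      · simp [Bool.not_eq_true] at hcf
        simp [hcf]
    have hs' := (List.all_eq_true.mp hs) (f p) (List.mem_finRange _)
    rw [hc] at hs'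
    simp only [Bool.not_true, Bool.false_or] at hs'
    have h' : ∀ qj ∈ asg ++ [(p, f p)], f qj.1 = qj.2 := by
      intro qj hq
      rcases List.mem_append.mp hq with h1 | h1
      · exact h qj h1
      · simp at h1; rw [h1]
    have := ih (asg ++ [(p, f p)]) h' hs'
    simpa [List.append_assoc] using this

lemma getv_map (f : ℤ × ℤ → Fin 7) :
    ∀ (l : List (ℤ × ℤ)) (p : ℤ × ℤ), p ∈ l →
      getv (l.map fun q => (q, f q)) p = f p := by
  intro l
  induction l with
  | nil => simp
  | cons q l ih =>
    intro p hp
    by_cases h : p = q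
    · subst h; simp [getv, List.lookup]
    · have hp' : p ∈ l := by rcases List.mem_cons.mp hp with h1 | h1; exact absurd h1 h; exact h1
      have hb : (p == q) = false := beq_false_of_ne h
      simp only [List.map_cons, getv, List.lookup, hb]
      exact ih p hp'

end NiceAux
namespace NiceAux

def ballL : List (ℤ × ℤ) := [(0,0),(1,0),(-1,0),(0,1),(0,-1),(1,-1),(-1,1)]

def seedA : Asg := [((0,0),0),((1,0),1),((-1,0),2),((0,1),3),((0,-1),4),((1,-1),5),((-1,1),6)]

theorem engCore (f : ℤ × ℤ → Fin 7) (hf : Nice f)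
    (h0 : f (0,0) = 0) (h1 : f (1,0) = 1) (h2 : f (-1,0) = 2) (h3 : f (0,1) = 3)
    (h4 : f (0,-1) = 4) (h5 : f (1,-1) = 5) (h6 : f (-1,1) = 6)
    (Q : Asg → Bool) (pts : List (ℤ × ℤ)) (hs : searchB Q pts seedA = true) :
    Q ((ballL ++ pts).map fun p => (p, f p)) = true := by
  have hseed : ∀ qj ∈ seedA, f qj.1 = qj.2 := by
    intro qj hq
    unfold seedA at hq
    simp only [List.mem_cons, List.not_mem_nil, or_false] at hq
    rcases hq with rfl|rfl|rfl|rfl|rfl|rfl|rfl <;> simp_all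
  have hres := searchB_sound f hf Q pts seedA hseed hs
  have he : seedA = ballL.map (fun q => (q, f q)) := by
    simp only [seedA, ballL, List.map_cons, List.map_nil, h0, h1, h2, h3, h4, h5, h6]
  rw [he, ← List.map_append] at hres
  exact hres


end NiceAux
namespace NiceAux
def pts1 : List (ℤ × ℤ) :=
  [(-2,0),(-2,1),(-2,2),(-1,-1),(-1,2),(0,-2),(0,2),(1,-2),(1,1),(2,-2),(2,-1),(2,0),(1,2),(2,1)]
def Q1 : Asg → Bool := fun a =>
  (getv a (1,2) == getv a (0,0)) || (getv a (2,1) == getv a (0,0))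
theorem eng1 (f : ℤ × ℤ → Fin 7) (hf : Nice f)
    (h0 : f (0,0) = 0) (h1 : f (1,0) = 1) (h2 : f (-1,0) = 2) (h3 : f (0,1) = 3)
    (h4 : f (0,-1) = 4) (h5 : f (1,-1) = 5) (h6 : f (-1,1) = 6) :
    f (1,2) = f (0,0) ∨ f (2,1) = f (0,0) := by
  have hQ := engCore f hf h0 h1 h2 h3 h4 h5 h6 Q1 pts1 (by decide)
  rw [Q1] at hQ
  rw [getv_map f _ _ (by decide), getv_map f _ _ (by decide), getv_map f _ _ (by decide)] at hQ
  simpa [Bool.or_eq_true, beq_iff_eq] using hQ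
end NiceAux

namespace NiceAux

def pts2a : List (ℤ × ℤ) :=
  [(-2,0),(-2,1),(-2,2),(-1,-1),(-1,2),(0,-2),(0,2),(1,-2),(1,1),(2,-2),(2,-1),(2,0),
   (1,2),(2,1),(3,-2),(3,-1),(3,0),(2,2),(3,1)]

def Q2a : Asg → Bool := fun a =>
  (!(getv a (1,2) == getv a (0,0)) || (getv a (2,2) == getv a (1,0))) &&
  (!(getv a (2,1) == getv a (0,0)) || (getv a (3,1) == getv a (1,0)))

theorem eng2a (f : ℤ × ℤ → Fin 7) (hf : Nice f)
    (h0 : f (0,0) = 0) (h1 : f (1,0) = 1) (h2 : f (-1,0) = 2) (h3 : f (0,1) = 3)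
    (h4 : f (0,-1) = 4) (h5 : f (1,-1) = 5) (h6 : f (-1,1) = 6) :
    (f (1,2) = f (0,0) → f (2,2) = f (1,0)) ∧ (f (2,1) = f (0,0) → f (3,1) = f (1,0)) := by
  have hQ := engCore f hf h0 h1 h2 h3 h4 h5 h6 Q2a pts2a (by decide)
  rw [Q2a] at hQ
  rw [getv_map f _ _ (by decide), getv_map f _ _ (by decide), getv_map f _ _ (by decide),
      getv_map f _ _ (by decide), getv_map f _ _ (by decide), getv_map f _ _ (by decide)] at hQ
  simp only [Bool.and_eq_true, Bool.or_eq_true, Bool.not_eq_true', beq_iff_eq,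
    beq_eq_false_iff_ne, ne_eq] at hQ
  constructor
  · intro h; rcases hQ.1 with h' | h'; exact absurd h h'; exact h'
  · intro h; rcases hQ.2 with h' | h'; exact absurd h h'; exact h'

def pts2b : List (ℤ × ℤ) :=
  [(-2,0),(-2,1),(-2,2),(-1,-1),(-1,2),(0,-2),(0,2),(1,-2),(1,1),(2,-2),(2,-1),(2,0),
   (-2,3),(-1,3),(0,3),(1,2),(2,1),(1,3),(2,2)]

def Q2b : Asg → Bool := fun a =>
  (!(getv a (1,2) == getv a (0,0)) || (getv a (1,3) == getv a (0,1))) &&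
  (!(getv a (2,1) == getv a (0,0)) || (getv a (2,2) == getv a (0,1)))

theorem eng2b (f : ℤ × ℤ → Fin 7) (hf : Nice f)
    (h0 : f (0,0) = 0) (h1 : f (1,0) = 1) (h2 : f (-1,0) = 2) (h3 : f (0,1) = 3)
    (h4 : f (0,-1) = 4) (h5 : f (1,-1) = 5) (h6 : f (-1,1) = 6) :
    (f (1,2) = f (0,0) → f (1,3) = f (0,1)) ∧ (f (2,1) = f (0,0) → f (2,2) = f (0,1)) := by
  have hQ := engCore f hf h0 h1 h2 h3 h4 h5 h6 Q2b pts2b (by decide)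
  rw [Q2b] at hQ
  rw [getv_map f _ _ (by decide), getv_map f _ _ (by decide), getv_map f _ _ (by decide),
      getv_map f _ _ (by decide), getv_map f _ _ (by decide), getv_map f _ _ (by decide)] at hQ
  simp only [Bool.and_eq_true, Bool.or_eq_true, Bool.not_eq_true', beq_iff_eq,
    beq_eq_false_iff_ne, ne_eq] at hQ
  constructor
  · intro h; rcases hQ.1 with h' | h'; exact absurd h h'; exact h'
  · intro h; rcases hQ.2 with h' | h'; exact absurd h h'; exact h'

end NiceAux

namespace NiceAux

def pts3 : List (ℤ × ℤ) :=
  [(-2,0),(-2,1),(-2,2),(-1,-1),(-1,2),(0,-2),(0,2),(1,-2),(1,1),(2,-2),(2,-1),(2,0),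
   (1,2),(2,1),(3,-3),(3,-2),(3,-1),(3,0),(3,1),(4,-3),(4,-2),(4,-1),(4,0),(5,-3),(5,-2),(5,-1)]

def Apts3 : List (ℤ × ℤ) :=
  [(-2,0),(-1,-1),(-1,0),(0,-2),(0,-1),(0,0),(1,-2),(1,-1),(2,-2),(2,-1),(3,-3),(3,-2),(4,-3)]

def Q3 : Asg → Bool := fun a =>
  !(Apts3.all fun p => getv a p == getv a (p.1 + 1, p.2 + 2)) ||
    (getv a (3,-1) == getv a (0,0))

theorem eng3 (f : ℤ × ℤ → Fin 7) (hf : Nice f)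
    (h0 : f (0,0) = 0) (h1 : f (1,0) = 1) (h2 : f (-1,0) = 2) (h3 : f (0,1) = 3)
    (h4 : f (0,-1) = 4) (h5 : f (1,-1) = 5) (h6 : f (-1,1) = 6)
    (hA : ∀ p ∈ Apts3, f p = f (p.1 + 1, p.2 + 2)) :
    f (3,-1) = f (0,0) := by
  have hQ := engCore f hf h0 h1 h2 h3 h4 h5 h6 Q3 pts3 (by decide)
  rw [Q3] at hQ
  have hmem : ∀ p ∈ Apts3, p ∈ (ballL ++ pts3) ∧ (p.1 + 1, p.2 + 2) ∈ (ballL ++ pts3) := by decide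
  have hH : (Apts3.all fun p =>
      getv ((ballL ++ pts3).map fun q => (q, f q)) p ==
      getv ((ballL ++ pts3).map fun q => (q, f q)) (p.1 + 1, p.2 + 2)) = true := by
    rw [List.all_eq_true]
    intro p hp
    rw [getv_map f _ _ (hmem p hp).1, getv_map f _ _ (hmem p hp).2, beq_iff_eq]
    exact hA p hp
  rw [hH] at hQ
  simp only [Bool.not_true, Bool.false_or, beq_iff_eq] at hQ
  rw [getv_map f _ _ (by decide), getv_map f _ _ (by decide)] at hQ
  exact hQ

def pts4 : List (ℤ × ℤ) :=
  [(-2,0),(-2,1),(-2,2),(-1,-1),(-1,2),(0,-2),(0,2),(1,-2),(1,1),(2,-2),(2,-1),(2,0),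
   (-3,3),(-2,3),(-1,3),(0,3),(1,2),(2,1),(-3,4),(-2,4),(-1,4),(0,4),(1,3),(-3,5),(-2,5),(-1,5)]

def Apts4 : List (ℤ × ℤ) :=
  [(-3,3),(-3,4),(-2,0),(-2,1),(-2,2),(-2,3),(-1,-1),(-1,0),(-1,1),(-1,2),(0,-2),(0,-1),(0,0)]

def Q4 : Asg → Bool := fun a =>
  !(Apts4.all fun p => getv a p == getv a (p.1 + 2, p.2 + 1)) ||
    (getv a (-1,3) == getv a (0,0))

theorem eng4 (f : ℤ × ℤ → Fin 7) (hf : Nice f)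
    (h0 : f (0,0) = 0) (h1 : f (1,0) = 1) (h2 : f (-1,0) = 2) (h3 : f (0,1) = 3)
    (h4 : f (0,-1) = 4) (h5 : f (1,-1) = 5) (h6 : f (-1,1) = 6)
    (hA : ∀ p ∈ Apts4, f p = f (p.1 + 2, p.2 + 1)) :
    f (-1,3) = f (0,0) := by
  have hQ := engCore f hf h0 h1 h2 h3 h4 h5 h6 Q4 pts4 (by decide)
  rw [Q4] at hQ
  have hmem : ∀ p ∈ Apts4, p ∈ (ballL ++ pts4) ∧ (p.1 + 2, p.2 + 1) ∈ (ballL ++ pts4) := by decide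
  have hH : (Apts4.all fun p =>
      getv ((ballL ++ pts4).map fun q => (q, f q)) p ==
      getv ((ballL ++ pts4).map fun q => (q, f q)) (p.1 + 2, p.2 + 1)) = true := by
    rw [List.all_eq_true]
    intro p hp
    rw [getv_map f _ _ (hmem p hp).1, getv_map f _ _ (hmem p hp).2, beq_iff_eq]
    exact hA p hp
  rw [hH] at hQ
  simp only [Bool.not_true, Bool.false_or, beq_iff_eq] at hQ
  rw [getv_map f _ _ (by decide), getv_map f _ _ (by decide)] at hQ
  exact hQ

end NiceAux

namespace NiceAux

lemma diff_shift (v d e : ℤ × ℤ) :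
    ((v + e).1 - (v + d).1, (v + e).2 - (v + d).2) = (e.1 - d.1, e.2 - d.2) := by
  simp only [Prod.mk.injEq, Prod.fst_add, Prod.snd_add]
  constructor <;> ring

lemma nice_shift {c : ℤ × ℤ → Fin 7} (hc : Nice c) (v d e : ℤ × ℤ)
    (h : (e.1 - d.1, e.2 - d.2) ∈ Dl) : c (v + d) ≠ c (v + e) := by
  apply hc
  rw [diff_shift]
  exact h

lemma point_shift (v p : ℤ × ℤ) (a b : ℤ) :
    v + (p.1 + a, p.2 + b) = (v + p) + (a, b) := by
  simp only [Prod.ext_iff, Prod.fst_add, Prod.snd_add]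
  constructor <;> ring

def bpt : Fin 7 → ℤ × ℤ
  | 0 => (0,0) | 1 => (1,0) | 2 => (-1,0) | 3 => (0,1) | 4 => (0,-1) | 5 => (1,-1) | 6 => (-1,1)

/-- normalized local coloring around `v` -/
theorem normalize (c : ℤ × ℤ → Fin 7) (hc : Nice c) (v : ℤ × ℤ) :
    ∃ f : ℤ × ℤ → Fin 7, Nice f ∧
      (∀ p q : ℤ × ℤ, f p = f q ↔ c (v + p) = c (v + q)) ∧
      (∀ i : Fin 7, f (bpt i) = i) := by
  have hmem : ∀ i j : Fin 7, i ≠ j →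
      ((bpt j).1 - (bpt i).1, (bpt j).2 - (bpt i).2) ∈ Dl := by decide
  have hinj : Function.Injective (fun i : Fin 7 => c (v + bpt i)) := by
    intro i j hij
    by_contra hne
    exact nice_shift hc v (bpt i) (bpt j) (hmem i j hne) hij
  let σ : Fin 7 ≃ Fin 7 := Equiv.ofBijective _ (Finite.injective_iff_bijective.mp hinj)
  refine ⟨fun p => σ.symm (c (v + p)), ?_, ?_, ?_⟩
  · intro u w h hcon
    exact hc (v + u) (v + w) (by rw [diff_shift]; exact h) (σ.symm.injective hcon)
  · intro p q
    constructor
    · exact fun h => σ.symm.injective h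
    · exact fun h => congrArg σ.symm h
  · intro i
    show σ.symm (c (v + bpt i)) = i
    have : σ i = c (v + bpt i) := rfl
    rw [← this, Equiv.symm_apply_apply]

def Ap (c : ℤ × ℤ → Fin 7) (v : ℤ × ℤ) : Prop := c (v + (1, 2)) = c v
def Bp (c : ℤ × ℤ → Fin 7) (v : ℤ × ℤ) : Prop := c (v + (2, 1)) = c v

lemma add_zero_pair (v : ℤ × ℤ) : v + ((0:ℤ), (0:ℤ)) = v := by
  simp [Prod.ext_iff]

lemma dichotomy {c : ℤ × ℤ → Fin 7} (hc : Nice c) (v : ℤ × ℤ) : Ap c v ∨ Bp c v := by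
  obtain ⟨f, hf, hiff, hb⟩ := normalize c hc v
  rcases eng1 f hf (hb 0) (hb 1) (hb 2) (hb 3) (hb 4) (hb 5) (hb 6) with h | h
  · left; have := (hiff _ _).mp h; rwa [add_zero_pair] at this
  · right; have := (hiff _ _).mp h; rwa [add_zero_pair] at this

lemma notboth {c : ℤ × ℤ → Fin 7} (hc : Nice c) (v : ℤ × ℤ) : ¬(Ap c v ∧ Bp c v) := by
  rintro ⟨ha, hb⟩
  exact nice_shift hc v ((1:ℤ),(2:ℤ)) ((2:ℤ),(1:ℤ)) (by decide) (ha.trans hb.symm)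

lemma stepA {c : ℤ × ℤ → Fin 7} (hc : Nice c) (v : ℤ × ℤ) :
    (Ap c v ↔ Ap c (v + (1,0))) ∧ (Ap c v ↔ Ap c (v + (0,1))) := by
  obtain ⟨f, hf, hiff, hb⟩ := normalize c hc v
  have e2a := eng2a f hf (hb 0) (hb 1) (hb 2) (hb 3) (hb 4) (hb 5) (hb 6)
  have e2b := eng2b f hf (hb 0) (hb 1) (hb 2) (hb 3) (hb 4) (hb 5) (hb 6)
  have hA0 : f (1,2) = f (0,0) ↔ Ap c v := by
    rw [hiff]; unfold Ap; rw [add_zero_pair]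
  have hB0 : f (2,1) = f (0,0) ↔ Bp c v := by
    rw [hiff]; unfold Bp; rw [add_zero_pair]
  have hA1 : f (2,2) = f (1,0) ↔ Ap c (v + (1,0)) := by
    rw [hiff]; unfold Ap
    have : v + ((2:ℤ),(2:ℤ)) = (v + (1,0)) + (1,2) := by
      simp only [Prod.ext_iff, Prod.fst_add, Prod.snd_add]; constructor <;> ring
    rw [this]
  have hB1 : f (3,1) = f (1,0) ↔ Bp c (v + (1,0)) := by
    rw [hiff]; unfold Bp
    have : v + ((3:ℤ),(1:ℤ)) = (v + (1,0)) + (2,1) := by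
      simp only [Prod.ext_iff, Prod.fst_add, Prod.snd_add]; constructor <;> ring
    rw [this]
  have hA2 : f (1,3) = f (0,1) ↔ Ap c (v + (0,1)) := by
    rw [hiff]; unfold Ap
    have : v + ((1:ℤ),(3:ℤ)) = (v + (0,1)) + (1,2) := by
      simp only [Prod.ext_iff, Prod.fst_add, Prod.snd_add]; constructor <;> ring
    rw [this]
  have hB2 : f (2,2) = f (0,1) ↔ Bp c (v + (0,1)) := by
    rw [hiff]; unfold Bp
    have : v + ((2:ℤ),(2:ℤ)) = (v + (0,1)) + (2,1) := by
      simp only [Prod.ext_iff, Prod.fst_add, Prod.snd_add]; constructor <;> ring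
    rw [this]
  constructor
  · constructor
    · intro h; exact hA1.mp (e2a.1 (hA0.mpr h))
    · intro h
      rcases dichotomy hc v with h' | h'
      · exact h'
      · exact absurd ⟨h, hB1.mp (e2a.2 (hB0.mpr h'))⟩ (notboth hc (v + (1,0)))
  · constructor
    · intro h; exact hA2.mp (e2b.1 (hA0.mpr h))
    · intro h
      rcases dichotomy hc v with h' | h'
      · exact h'
      · exact absurd ⟨h, hB2.mp (e2b.2 (hB0.mpr h'))⟩ (notboth hc (v + (0,1)))

end NiceAux

namespace NiceAux

lemma A_transx {c : ℤ × ℤ → Fin 7} (hc : Nice c) :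
    ∀ (x : ℤ) (w : ℤ × ℤ), Ap c (w + (x, (0:ℤ))) ↔ Ap c w := by
  intro x
  induction x using Int.induction_on with
  | zero => intro w; rw [add_zero_pair]
  | succ n ih =>
    intro w
    have he : w + ((n:ℤ) + 1, (0:ℤ)) = (w + ((n:ℤ), (0:ℤ))) + (1, 0) := by
      simp only [Prod.ext_iff, Prod.fst_add, Prod.snd_add]; constructor <;> ring
    rw [he, ← (stepA hc (w + ((n:ℤ), (0:ℤ)))).1]
    exact ih w
  | pred n ih =>
    intro w
    have he : (w + (-(n:ℤ) - 1, (0:ℤ))) + (1, 0) = w + (-(n:ℤ), (0:ℤ)) := by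
      simp only [Prod.ext_iff, Prod.fst_add, Prod.snd_add]; constructor <;> ring
    have h2 := (stepA hc (w + (-(n:ℤ) - 1, (0:ℤ)))).1
    rw [he] at h2
    exact h2.trans (ih w)

lemma A_transy {c : ℤ × ℤ → Fin 7} (hc : Nice c) :
    ∀ (y : ℤ) (w : ℤ × ℤ), Ap c (w + ((0:ℤ), y)) ↔ Ap c w := by
  intro y
  induction y using Int.induction_on with
  | zero => intro w; rw [add_zero_pair]
  | succ n ih =>
    intro w
    have he : w + ((0:ℤ), (n:ℤ) + 1) = (w + ((0:ℤ), (n:ℤ))) + (0, 1) := by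
      simp only [Prod.ext_iff, Prod.fst_add, Prod.snd_add]; constructor <;> ring
    rw [he, ← (stepA hc (w + ((0:ℤ), (n:ℤ)))).2]
    exact ih w
  | pred n ih =>
    intro w
    have he : (w + ((0:ℤ), -(n:ℤ) - 1)) + (0, 1) = w + ((0:ℤ), -(n:ℤ)) := by
      simp only [Prod.ext_iff, Prod.fst_add, Prod.snd_add]; constructor <;> ring
    have h2 := (stepA hc (w + ((0:ℤ), -(n:ℤ) - 1))).2
    rw [he] at h2
    exact h2.trans (ih w)

lemma A_const {c : ℤ × ℤ → Fin 7} (hc : Nice c) (v : ℤ × ℤ) : Ap c v ↔ Ap c ((0:ℤ), (0:ℤ)) := by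
  have h1 : v = (((0:ℤ), (0:ℤ)) + ((0:ℤ), v.2)) + (v.1, (0:ℤ)) := by
    simp only [Prod.ext_iff, Prod.fst_add, Prod.snd_add]; constructor <;> ring
  rw [h1, A_transx hc, A_transy hc]

/-- periodicity -/
def Per (c : ℤ × ℤ → Fin 7) (p : ℤ × ℤ) : Prop := ∀ v, c (v + p) = c v

lemma per_iter {c : ℤ × ℤ → Fin 7} {p : ℤ × ℤ} (h : Per c p) :
    ∀ (n : ℤ) (v : ℤ × ℤ), c (v + (n * p.1, n * p.2)) = c v := by
  intro n
  induction n using Int.induction_on with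
  | zero => intro v; simp [add_zero_pair]
  | succ n ih =>
    intro v
    have he : v + (((n:ℤ) + 1) * p.1, ((n:ℤ) + 1) * p.2)
        = (v + ((n:ℤ) * p.1, (n:ℤ) * p.2)) + p := by
      simp only [Prod.ext_iff, Prod.fst_add, Prod.snd_add]; constructor <;> ring
    rw [he, h]
    exact ih v
  | pred n ih =>
    intro v
    have he : (v + ((-(n:ℤ) - 1) * p.1, (-(n:ℤ) - 1) * p.2)) + p
        = v + ((-(n:ℤ)) * p.1, (-(n:ℤ)) * p.2) := by
      simp only [Prod.ext_iff, Prod.fst_add, Prod.snd_add]; constructor <;> ring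
    have h2 := h (v + ((-(n:ℤ) - 1) * p.1, (-(n:ℤ) - 1) * p.2))
    rw [he] at h2
    exact h2.symm.trans (ih v)

lemma combo {c : ℤ × ℤ → Fin 7} {p q : ℤ × ℤ} (h1 : Per c p) (h2 : Per c q)
    (u w : ℤ × ℤ) (a b : ℤ)
    (hx : u.1 + a * p.1 + b * q.1 = w.1) (hy : u.2 + a * p.2 + b * q.2 = w.2) :
    c u = c w := by
  have e1 := per_iter h1 a u
  have e2 := per_iter h2 b (u + (a * p.1, a * p.2))
  have he : (u + (a * p.1, a * p.2)) + (b * q.1, b * q.2) = w := by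
    simp only [Prod.ext_iff, Prod.fst_add, Prod.snd_add]
    constructor <;> omega
  rw [he] at e2
  exact e1.symm.trans e2.symm

end NiceAux

namespace NiceAux

lemma perA2 {c : ℤ × ℤ → Fin 7} (hc : Nice c) (hA : ∀ v, Ap c v) : Per c (3, -1) := by
  intro v
  obtain ⟨f, hf, hiff, hb⟩ := normalize c hc v
  have h3 := eng3 f hf (hb 0) (hb 1) (hb 2) (hb 3) (hb 4) (hb 5) (hb 6) ?_
  · have := (hiff _ _).mp h3
    rwa [add_zero_pair] at this
  · intro p _
    rw [hiff, point_shift]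
    exact (hA (v + p)).symm

lemma perB2 {c : ℤ × ℤ → Fin 7} (hc : Nice c) (hB : ∀ v, Bp c v) : Per c (-1, 3) := by
  intro v
  obtain ⟨f, hf, hiff, hb⟩ := normalize c hc v
  have h4 := eng4 f hf (hb 0) (hb 1) (hb 2) (hb 3) (hb 4) (hb 5) (hb 6) ?_
  · have := (hiff _ _).mp h4
    rwa [add_zero_pair] at this
  · intro p _
    rw [hiff, point_shift]
    exact (hB (v + p)).symm

lemma build (c : ℤ × ℤ → Fin 7) (hc : Nice c) (z : ZMod 7)
    (hz : ∀ t : ZMod 7, t ≠ 0 → ∃ d ∈ Dl, ((d.1 : ZMod 7) + z * (d.2 : ZMod 7)) = t)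
    (key : ∀ u w : ℤ × ℤ, linColoring z u = linColoring z w → c u = c w) :
    ∃ π : ZMod 7 ≃ Fin 7, ∀ v : ℤ × ℤ, c v = π (linColoring z v) := by
  have hlin : ∀ k : ZMod 7, linColoring z ((k.val : ℤ), (0:ℤ)) = k := by
    intro k
    show ((k.val : ℤ) : ZMod 7) + z * ((0 : ℤ) : ZMod 7) = k
    simp only [Int.cast_natCast, Int.cast_zero, mul_zero, add_zero]
    exact ZMod.natCast_rightInverse k
  have hval : ∀ v, c v = c ((((linColoring z v).val : ℤ)), (0:ℤ)) := by
    intro v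
    exact (key _ v (by rw [hlin])).symm
  have hinj : Function.Injective (fun k : ZMod 7 => c ((k.val : ℤ), (0:ℤ))) := by
    intro a b hab
    by_contra hne
    obtain ⟨d, hd, hdv⟩ := hz (b - a) (sub_ne_zero.mpr (Ne.symm hne))
    have h1 : linColoring z (((a.val : ℤ), (0:ℤ)) + d) = b := by
      show (((a.val : ℤ) + d.1 : ℤ) : ZMod 7) + z * (((0:ℤ) + d.2 : ℤ) : ZMod 7) = b
      push_cast
      have ha : ((a.val : ℕ) : ZMod 7) = a := ZMod.natCast_rightInverse a
      rw [zero_add, ha]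
      linear_combination hdv
    have h2 : c (((a.val : ℤ), (0:ℤ)) + d) = c (((b.val : ℤ)), (0:ℤ)) :=
      key _ _ (by rw [h1, hlin])
    have h3 : c (((a.val : ℤ)), (0:ℤ)) ≠ c (((a.val : ℤ), (0:ℤ)) + d) := by
      have := nice_shift hc ((a.val : ℤ), (0:ℤ)) ((0:ℤ), (0:ℤ)) d (by simpa using hd)
      rwa [add_zero_pair] at this
    exact h3 (hab.trans h2.symm)
  have hbij : Function.Bijective (fun k : ZMod 7 => c ((k.val : ℤ), (0:ℤ))) := by
    rw [Fintype.bijective_iff_injective_and_card]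
    exact ⟨hinj, by simp⟩
  exact ⟨Equiv.ofBijective _ hbij, fun v => hval v⟩

end NiceAux


open NiceAux

/-- Every nice 7-coloring of the whole triangular lattice is an Isbell coloring. -/
theorem nice_coloring_isbell (c : ℤ × ℤ → Fin 7)
    (hnice : ∀ u v : ℤ × ℤ, u ≠ v → triLattice.dist u v ≤ 2 → c u ≠ c v) :
    ∃ z ∈ ({3, 5} : Set (ZMod 7)), ∃ π : ZMod 7 ≃ Fin 7,
      ∀ v : ℤ × ℤ, c v = π (linColoring z v) := by
  have hc : Nice c := nice_of_hnice c hnice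
  by_cases hA : Ap c ((0:ℤ), (0:ℤ))
  · refine ⟨3, by simp, ?_⟩
    have hAall : ∀ v, Ap c v := fun v => (A_const hc v).mpr hA
    have p1 : Per c (1, 2) := fun v => hAall v
    have p2 : Per c (3, -1) := perA2 hc hAall
    apply build c hc 3 (by decide)
    intro u w h
    unfold linColoring at h
    have hd : ((w.1 - u.1 + 3 * (w.2 - u.2) : ℤ) : ZMod 7) = 0 := by
      push_cast
      linear_combination -h
    obtain ⟨m, hm⟩ := (ZMod.intCast_zmod_eq_zero_iff_dvd _ 7).mp hd
    exact combo p1 p2 u w m (2 * m - (w.2 - u.2)) (by dsimp only; omega) (by dsimp only; omega)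
  · refine ⟨5, by simp, ?_⟩
    have hBall : ∀ v, Bp c v := by
      intro v
      rcases dichotomy hc v with h | h
      · exact absurd ((A_const hc v).mp h) hA
      · exact h
    have p1 : Per c (2, 1) := fun v => hBall v
    have p2 : Per c (-1, 3) := perB2 hc hBall
    apply build c hc 5 (by decide)
    intro u w h
    unfold linColoring at h
    have hd : ((w.1 - u.1 + 5 * (w.2 - u.2) : ℤ) : ZMod 7) = 0 := by
      push_cast
      linear_combination -h
    obtain ⟨m, hm⟩ := (ZMod.intCast_zmod_eq_zero_iff_dvd _ 7).mp hd
    exact combo p1 p2 u w (3 * m - 2 * (w.2 - u.2)) ((w.2 - u.2) - m)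
      (by dsimp only; omega) (by dsimp only; omega)
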